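/- Rank-one perturbation lemma: let z < 0 be real, let B ∈ ℂ^{M×M} be Hermitian positive semidefinite, let x ∈ ℂ^M, and let A ∈ ℂ^{M×M}. Then both B − zI and B + x x^H − zI are invertible and |(1/M)·tr(((B − zI)^{-1} − (B + x x^H − zI)^{-1})·A)| ≤ ‖A‖/(M·|z|), where ‖A‖ denotes the operator norm of A with respect to the Euclidean norm on ℂ^M. -/

import Mathlib

open Matrix ComplexOrder

lemma my_vecMulVec_mulVec {n : Type*} [Fintype n] {R : Type*} [CommRing R]
    (w v u : n → R) : Matrix.vecMulVec w v *ᵥ u = (v ⬝ᵥ u) • w := by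
  ext i
  simp only [Matrix.mulVec, dotProduct, Matrix.vecMulVec_apply, Pi.smul_apply,
    smul_eq_mul, Finset.sum_mul]
  exact Finset.sum_congr rfl fun j _ => by ring

lemma my_trace_vecMulVec_mul {n : Type*} [Fintype n] {R : Type*} [CommRing R]
    (w v : n → R) (C : Matrix n n R) :
    Matrix.trace (Matrix.vecMulVec w v * C) = v ⬝ᵥ (C *ᵥ w) := by
  simp only [Matrix.trace, Matrix.diag, Matrix.mul_apply, Matrix.vecMulVec_apply,
    dotProduct, Matrix.mulVec, Finset.mul_sum]
  rw [Finset.sum_comm]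
  exact Finset.sum_congr rfl fun j _ => Finset.sum_congr rfl fun i _ => by ring

lemma my_vecMulVec_posSemidef {n : Type*} [Fintype n] (x : n → ℂ) :
    (Matrix.vecMulVec x (star x)).PosSemidef := by
  rw [Matrix.posSemidef_iff_dotProduct_mulVec]
  constructor
  · ext i j
    simp [Matrix.vecMulVec_apply, Matrix.conjTranspose_apply, mul_comm]
  · intro v
    rw [my_vecMulVec_mulVec, dotProduct_smul]
    have h : star v ⬝ᵥ x = star (star x ⬝ᵥ v) := by
      simp [dotProduct, Finset.sum_congr, mul_comm]
    rw [smul_eq_mul, h]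
    exact mul_star_self_nonneg _

/-- Rank-one perturbation lemma. -/
theorem rank_one_perturbation_lemma
    (M : ℕ) (hM : 0 < M) (z : ℝ) (hz : z < 0)
    (B : Matrix (Fin M) (Fin M) ℂ) (hB : B.PosSemidef)
    (x : Fin M → ℂ) (A : Matrix (Fin M) (Fin M) ℂ) :
    IsUnit (B - (z : ℂ) • 1) ∧
    IsUnit (B + Matrix.vecMulVec x (star x) - (z : ℂ) • 1) ∧
    ‖(1 / (M : ℂ)) * Matrix.trace
        (((B - (z : ℂ) • 1)⁻¹ - (B + Matrix.vecMulVec x (star x) - (z : ℂ) • 1)⁻¹) * A)‖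
      ≤ ‖Matrix.toEuclideanCLM (𝕜 := ℂ) A‖ / (M * |z|) := by
  have hXpsd := my_vecMulVec_posSemidef x
  set X := Matrix.vecMulVec x (star x) with hXdef
  have hNz : Matrix.PosDef ((-(z:ℂ)) • (1 : Matrix (Fin M) (Fin M) ℂ)) := by
    rw [Matrix.smul_one_eq_diagonal, Matrix.posDef_diagonal_iff]
    intro i
    rw [← Complex.ofReal_neg]
    exact Complex.zero_lt_real.mpr (by linarith)
  have hE1 : (B - (z:ℂ) • (1 : Matrix (Fin M) (Fin M) ℂ)).PosDef := by
    have h : B - (z:ℂ) • (1 : Matrix (Fin M) (Fin M) ℂ) = B + (-(z:ℂ)) • 1 := by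
      rw [neg_smul]; abel
    rw [h]
    exact Matrix.PosDef.posSemidef_add hB hNz
  have hE2 : (B + X - (z:ℂ) • (1 : Matrix (Fin M) (Fin M) ℂ)).PosDef := by
    have h : B + X - (z:ℂ) • (1 : Matrix (Fin M) (Fin M) ℂ) = (B + X) + (-(z:ℂ)) • 1 := by
      rw [neg_smul]; abel
    rw [h]
    exact Matrix.PosDef.posSemidef_add (hB.add hXpsd) hNz
  refine ⟨hE1.isUnit, hE2.isUnit, ?_⟩
  set E1 := B - (z:ℂ) • (1 : Matrix (Fin M) (Fin M) ℂ) with hE1def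
  set E2 := B + X - (z:ℂ) • (1 : Matrix (Fin M) (Fin M) ℂ) with hE2def
  have hd1 : IsUnit E1.det := (Matrix.isUnit_iff_isUnit_det E1).mp hE1.isUnit
  have hd2 : IsUnit E2.det := (Matrix.isUnit_iff_isUnit_det E2).mp hE2.isUnit
  set R1 := E1⁻¹ with hR1def
  set R2 := E2⁻¹ with hR2def
  have h11 : E1 * R1 = 1 := Matrix.mul_nonsing_inv E1 hd1
  have h11' : R1 * E1 = 1 := Matrix.nonsing_inv_mul E1 hd1
  have h22 : E2 * R2 = 1 := Matrix.mul_nonsing_inv E2 hd2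
  have h22' : R2 * E2 = 1 := Matrix.nonsing_inv_mul E2 hd2
  have hE21 : E2 = E1 + X := by rw [hE1def, hE2def]; abel
  have hres : R1 - R2 = R1 * X * R2 := by
    have e1 : R1 * E2 * R2 = R1 := by rw [mul_assoc, h22, mul_one]
    have e2 : R1 * E1 * R2 = R2 := by rw [h11', one_mul]
    have : R1 * X * R2 = R1 - R2 := by
      calc R1 * X * R2 = R1 * (E2 - E1) * R2 := by rw [hE21, add_sub_cancel_left]
        _ = R1 * E2 * R2 - R1 * E1 * R2 := by rw [mul_sub, sub_mul]
        _ = R1 - R2 := by rw [e1, e2]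
    exact this.symm
  set u := R1 *ᵥ x with hudef
  set t := star x ⬝ᵥ u with htdef
  have hR1pd : R1.PosDef := hE1.inv
  have hR2pd : R2.PosDef := hE2.inv
  have ht0 : 0 ≤ t := hR1pd.posSemidef.dotProduct_mulVec_nonneg x
  have htre : 0 ≤ t.re := (Complex.nonneg_iff.mp ht0).1
  have htim : t.im = 0 := ((Complex.nonneg_iff.mp ht0).2).symm
  have htreal : ((t.re : ℝ) : ℂ) = t := Complex.ext (by simp) (by simp [htim])
  have h1t : (1 + t) ≠ 0 := by
    intro h
    have h' : (1 + t).re = 0 := by rw [h]; simp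
    simp only [Complex.add_re, Complex.one_re] at h'
    linarith
  have hE1u : E1 *ᵥ u = x := by
    rw [hudef, Matrix.mulVec_mulVec, h11, Matrix.one_mulVec]
  have hXu : X *ᵥ u = t • x := by
    rw [hXdef, my_vecMulVec_mulVec, htdef]
  have hE2u : E2 *ᵥ u = (1 + t) • x := by
    rw [hE21, Matrix.add_mulVec, hE1u, hXu, add_smul, one_smul]
  have hR2x : R2 *ᵥ x = (1 + t)⁻¹ • u := by
    have h1 : R2 *ᵥ (E2 *ᵥ u) = u := by
      rw [Matrix.mulVec_mulVec, h22', Matrix.one_mulVec]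
    rw [hE2u, Matrix.mulVec_smul] at h1
    rw [← h1, smul_smul, inv_mul_cancel₀ h1t, one_smul]
  have hst : star t = t := by
    rw [RCLike.star_def]
    exact Complex.conj_eq_iff_im.mpr htim
  have hmainT : Matrix.trace ((R1 - R2) * A) = (1+t)⁻¹ * (star u ⬝ᵥ (A *ᵥ u)) := by
    rw [hres]
    have ha : R1 * X * R2 * A = R1 * (X * (R2 * A)) := by
      rw [mul_assoc, mul_assoc]
    rw [ha, Matrix.trace_mul_comm]
    have hb : X * (R2 * A) * R1 = X * (R2 * A * R1) := by
      rw [mul_assoc, mul_assoc]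
    rw [hb, hXdef, my_trace_vecMulVec_mul]
    have hc : (R2 * A * R1) *ᵥ x = R2 *ᵥ (A *ᵥ u) := by
      rw [hudef, ← Matrix.mulVec_mulVec, ← Matrix.mulVec_mulVec]
    rw [hc]
    have hsw : star x ⬝ᵥ (R2 *ᵥ (A *ᵥ u)) = star (R2 *ᵥ x) ⬝ᵥ (A *ᵥ u) := by
      rw [Matrix.dotProduct_mulVec, Matrix.star_mulVec, hR2pd.1]
    rw [hsw, hR2x, star_smul, smul_dotProduct, star_inv₀, star_add, star_one, hst,
      smul_eq_mul]
  rw [hmainT]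
  -- norms
  set u' : EuclideanSpace ℂ (Fin M) := (WithLp.equiv 2 (Fin M → ℂ)).symm u with hu'def
  have hinner : (inner ℂ u' (Matrix.toEuclideanCLM (𝕜 := ℂ) A u') : ℂ) = star u ⬝ᵥ (A *ᵥ u) := by
    rw [EuclideanSpace.inner_eq_star_dotProduct, dotProduct_comm]
    rfl
  have hb1 : ‖star u ⬝ᵥ (A *ᵥ u)‖ ≤ ‖Matrix.toEuclideanCLM (𝕜 := ℂ) A‖ * ‖u'‖^2 := by
    rw [← hinner]
    calc ‖(inner ℂ u' (Matrix.toEuclideanCLM (𝕜 := ℂ) A u') : ℂ)‖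
        ≤ ‖u'‖ * ‖Matrix.toEuclideanCLM (𝕜 := ℂ) A u'‖ := norm_inner_le_norm _ _
      _ ≤ ‖u'‖ * (‖Matrix.toEuclideanCLM (𝕜 := ℂ) A‖ * ‖u'‖) := by
          gcongr
          exact (Matrix.toEuclideanCLM (𝕜 := ℂ) A).le_opNorm u'
      _ = ‖Matrix.toEuclideanCLM (𝕜 := ℂ) A‖ * ‖u'‖^2 := by ring
  have hnormu : (star u ⬝ᵥ u : ℂ) = ((‖u'‖ : ℂ))^2 := by
    have h := inner_self_eq_norm_sq_to_K (𝕜 := ℂ) u'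
    rw [EuclideanSpace.inner_eq_star_dotProduct, dotProduct_comm] at h
    exact h
  -- energy bound
  have htE : t = star u ⬝ᵥ (E1 *ᵥ u) := by
    calc t = star (E1 *ᵥ u) ⬝ᵥ u := by rw [hE1u]
      _ = star u ⬝ᵥ (E1 *ᵥ u) := by
          rw [Matrix.star_mulVec, hE1.1, ← Matrix.dotProduct_mulVec]
  have hsplit : star u ⬝ᵥ (E1 *ᵥ u) = star u ⬝ᵥ (B *ᵥ u) - (z:ℂ) * ((‖u'‖:ℂ))^2 := by
    rw [hE1def, Matrix.sub_mulVec, dotProduct_sub, Matrix.smul_mulVec,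
      Matrix.one_mulVec, dotProduct_smul, smul_eq_mul, hnormu]
  have hBu : 0 ≤ (star u ⬝ᵥ (B *ᵥ u)).re := (Complex.nonneg_iff.mp (hB.dotProduct_mulVec_nonneg u)).1
  have hq : -z * ‖u'‖^2 ≤ t.re := by
    have h := congrArg Complex.re (htE.trans hsplit)
    have h2 : ((z:ℂ) * ((‖u'‖:ℂ))^2).re = z * ‖u'‖^2 := by
      have : (z:ℂ) * ((‖u'‖:ℂ))^2 = ((z * ‖u'‖^2 : ℝ) : ℂ) := by push_cast; ring
      rw [this, Complex.ofReal_re]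
    rw [Complex.sub_re, h2] at h
    linarith
  -- final arithmetic
  have hw : (0:ℝ) < -z := by linarith
  have hnorm1t : ‖(1+t)⁻¹‖ = (1 + t.re)⁻¹ := by
    have h : (1 + t) = (((1 + t.re : ℝ)) : ℂ) := by
      rw [Complex.ofReal_add, Complex.ofReal_one, htreal]
    rw [h, ← Complex.ofReal_inv, Complex.norm_real, Real.norm_eq_abs,
      abs_of_pos (by positivity)]
  have hnormM : ‖(1 / (M:ℂ))‖ = 1 / (M:ℝ) := by
    rw [norm_div, norm_one, Complex.norm_natCast]
  rw [norm_mul, norm_mul, hnormM, hnorm1t]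
  have hc0 : (0:ℝ) ≤ ‖Matrix.toEuclideanCLM (𝕜 := ℂ) A‖ := norm_nonneg _
  have hkey : (1 + t.re)⁻¹ * ‖star u ⬝ᵥ (A *ᵥ u)‖ ≤ ‖Matrix.toEuclideanCLM (𝕜 := ℂ) A‖ / (-z) := by
    have hq2 : ‖u'‖^2 ≤ t.re / (-z) := by
      rw [le_div_iff₀ hw]
      nlinarith
    have step : ‖star u ⬝ᵥ (A *ᵥ u)‖ ≤ ‖Matrix.toEuclideanCLM (𝕜 := ℂ) A‖ * (t.re / (-z)) := by
      calc ‖star u ⬝ᵥ (A *ᵥ u)‖ ≤ ‖Matrix.toEuclideanCLM (𝕜 := ℂ) A‖ * ‖u'‖^2 := hb1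
        _ ≤ _ := by gcongr
    calc (1 + t.re)⁻¹ * ‖star u ⬝ᵥ (A *ᵥ u)‖
        ≤ (1 + t.re)⁻¹ * (‖Matrix.toEuclideanCLM (𝕜 := ℂ) A‖ * (t.re / (-z))) := by
          gcongr
      _ = ‖Matrix.toEuclideanCLM (𝕜 := ℂ) A‖ / (-z) * (t.re / (1 + t.re)) := by
          ring
      _ ≤ ‖Matrix.toEuclideanCLM (𝕜 := ℂ) A‖ / (-z) := by
          apply mul_le_of_le_one_right (div_nonneg hc0 (by linarith))
          rw [div_le_one (by linarith)]
          linarith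
  rw [abs_of_neg hz]
  have hM' : (0:ℝ) < (M:ℝ) := by exact_mod_cast hM
  calc 1/(M:ℝ) * ((1 + t.re)⁻¹ * ‖star u ⬝ᵥ (A *ᵥ u)‖)
      ≤ 1/(M:ℝ) * (‖Matrix.toEuclideanCLM (𝕜 := ℂ) A‖ / (-z)) := by gcongr
    _ = ‖Matrix.toEuclideanCLM (𝕜 := ℂ) A‖ / ((M:ℝ) * (-z)) := by
        rw [div_mul_div_comm, one_mul]
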